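/- Let g be a finite-dimensional real Lie algebra and λ : g × g → ℝ an alternating bilinear form. Define the affine bracket on smooth functions on g* by {f,g}_λ(ξ) := ξ([d_ξ f, d_ξ g]) + λ(d_ξ f, d_ξ g). Then {·,·}_λ satisfies the Jacobi identity {f,{g,h}_λ}_λ + {h,{f,g}_λ}_λ + {g,{h,f}_λ}_λ = 0 for all smooth f, g, h : g* → ℝ if and only if λ is a 2-cocycle on g, i.e. λ(u,[v,w]) + λ(w,[u,v]) + λ(v,[w,u]) = 0 for all u, v, w ∈ g. -/

import Mathlib

/-- The affine bracket on functions on the dual `g* = g →L[ℝ] ℝ` of a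
finite-dimensional real Lie algebra `g` (with Lie bracket `brkt`), modified by an
alternating bilinear form `lam` on `g`:
`{f,g}_λ(ξ) = ξ ⁅d_ξ f, d_ξ g⁆ + λ(d_ξ f, d_ξ g)`. -/
noncomputable def affineBracket {L : Type*} [NormedAddCommGroup L] [NormedSpace ℝ L]
    (brkt : L →ₗ[ℝ] L →ₗ[ℝ] L) (lam : L →ₗ[ℝ] L →ₗ[ℝ] ℝ)
    (d : ((L →L[ℝ] ℝ) → ℝ) → (L →L[ℝ] ℝ) → L)
    (f g : (L →L[ℝ] ℝ) → ℝ) : (L →L[ℝ] ℝ) → ℝ :=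
  fun ξ => ξ (brkt (d f ξ) (d g ξ)) + lam (d f ξ) (d g ξ)


set_option linter.unusedSectionVars false
set_option maxHeartbeats 1000000

section Aux

variable {L : Type*} [NormedAddCommGroup L] [NormedSpace ℝ L] [FiniteDimensional ℝ L]

lemma aux_sep (u v : L) (h : ∀ α : L →L[ℝ] ℝ, α u = α v) : u = v := by
  rw [← sub_eq_zero, ← Module.forall_dual_apply_eq_zero_iff ℝ (u - v)]
  intro φ
  have := h (LinearMap.toContinuousLinearMap φ)
  simp only [LinearMap.coe_toContinuousLinearMap'] at this
  simp [map_sub, this]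

noncomputable def jc : L ≃L[ℝ] ((L →L[ℝ] ℝ) →L[ℝ] ℝ) :=
  LinearEquiv.toContinuousLinearEquiv <|
  LinearMap.linearEquivOfInjective (ContinuousLinearMap.apply ℝ ℝ).toLinearMap
    (fun u v huv => by
      apply aux_sep
      intro α
      have h1 : ContinuousLinearMap.apply ℝ ℝ u = ContinuousLinearMap.apply ℝ ℝ v := huv
      have := congrFun (congrArg (fun (T : (L →L[ℝ] ℝ) →L[ℝ] ℝ) => (T : (L →L[ℝ] ℝ) → ℝ)) h1) α
      simpa using this)
    (by
      have e1 : ((L →L[ℝ] ℝ) →L[ℝ] ℝ) ≃ₗ[ℝ] Module.Dual ℝ (L →L[ℝ] ℝ) :=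
        (LinearMap.toContinuousLinearMap).symm
      have e2 : (L →L[ℝ] ℝ) ≃ₗ[ℝ] Module.Dual ℝ L := (LinearMap.toContinuousLinearMap).symm
      rw [e1.finrank_eq, Subspace.dual_finrank_eq, e2.finrank_eq, Subspace.dual_finrank_eq])

@[simp] lemma jc_apply (u : L) (α : L →L[ℝ] ℝ) : jc u α = α u := by
  simp [jc, LinearEquiv.coe_toContinuousLinearEquiv, LinearMap.linearEquivOfInjective_apply]
  rfl

@[simp] lemma jc_symm_apply (X : (L →L[ℝ] ℝ) →L[ℝ] ℝ) (γ : L →L[ℝ] ℝ) :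
    γ (jc.symm X) = X γ := by
  have := jc_apply (jc.symm X) γ
  rw [jc.apply_symm_apply] at this
  exact this.symm

lemma d_eq (d : ((L →L[ℝ] ℝ) → ℝ) → (L →L[ℝ] ℝ) → L)
    (hd : ∀ (f : (L →L[ℝ] ℝ) → ℝ) (ξ α : L →L[ℝ] ℝ), α (d f ξ) = fderiv ℝ f ξ α)
    (f : (L →L[ℝ] ℝ) → ℝ) (ξ : L →L[ℝ] ℝ) :
    d f ξ = jc.symm (fderiv ℝ f ξ) := by
  apply aux_sep
  intro α
  rw [hd, jc_symm_apply]

/-- second-differential of `g` at `ξ`, as a map into `L`. -/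
noncomputable def dd (g : (L →L[ℝ] ℝ) → ℝ) (ξ : L →L[ℝ] ℝ) : (L →L[ℝ] ℝ) →L[ℝ] L :=
  (jc.symm : ((L →L[ℝ] ℝ) →L[ℝ] ℝ) ≃L[ℝ] L).toContinuousLinearMap.comp
    (fderiv ℝ (fderiv ℝ g) ξ)

lemma smooth_fderiv {g : (L →L[ℝ] ℝ) → ℝ} (hg : ContDiff ℝ (⊤ : ℕ∞) g) :
    ContDiff ℝ (⊤ : ℕ∞) (fderiv ℝ g) :=
  hg.fderiv_right (m := (⊤ : ℕ∞)) (by exact_mod_cast le_top)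

lemma hasFDerivAt_d (d : ((L →L[ℝ] ℝ) → ℝ) → (L →L[ℝ] ℝ) → L)
    (hd : ∀ (f : (L →L[ℝ] ℝ) → ℝ) (ξ α : L →L[ℝ] ℝ), α (d f ξ) = fderiv ℝ f ξ α)
    {g : (L →L[ℝ] ℝ) → ℝ} (hg : ContDiff ℝ (⊤ : ℕ∞) g) (ξ : L →L[ℝ] ℝ) :
    HasFDerivAt (fun η => d g η) (dd g ξ) ξ := by
  have h1 :=
    (((smooth_fderiv hg).differentiable (by simp)) ξ).hasFDerivAt
  have h2 := ((jc.symm : ((L →L[ℝ] ℝ) →L[ℝ] ℝ) ≃L[ℝ] L).toContinuousLinearMap.hasFDerivAt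
      (x := fderiv ℝ g ξ)).comp ξ h1
  have heq : (fun η => d g η)
      = fun η => (jc.symm : ((L →L[ℝ] ℝ) →L[ℝ] ℝ) ≃L[ℝ] L).toContinuousLinearMap
          (fderiv ℝ g η) := by
    funext η; simpa using d_eq d hd g η
  rw [heq]
  exact h2

lemma dd_symm {g : (L →L[ℝ] ℝ) → ℝ} (hg : ContDiff ℝ (⊤ : ℕ∞) g) (ξ α β : L →L[ℝ] ℝ) :
    β (dd g ξ α) = α (dd g ξ β) := by
  have key : ∀ γ δ : L →L[ℝ] ℝ, γ (dd g ξ δ) = fderiv ℝ (fderiv ℝ g) ξ δ γ := by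
    intro γ δ
    simp [dd]
  rw [key, key]
  exact second_derivative_symmetric (f := g) (f' := fderiv ℝ g)
    (fun y => ((hg.differentiable (by simp)) y).hasFDerivAt)
    (((smooth_fderiv hg).differentiable (by simp) ξ).hasFDerivAt) α β

/-- continuous version of a bilinear map (finite dimensions). -/
noncomputable def cts (b : L →ₗ[ℝ] L →ₗ[ℝ] L) : L →L[ℝ] L →L[ℝ] L :=
  LinearMap.toContinuousLinearMap
    ((LinearMap.toContinuousLinearMap : (L →ₗ[ℝ] L) ≃ₗ[ℝ] (L →L[ℝ] L)).toLinearMap.comp b)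

noncomputable def ctsR (b : L →ₗ[ℝ] L →ₗ[ℝ] ℝ) : L →L[ℝ] L →L[ℝ] ℝ :=
  LinearMap.toContinuousLinearMap
    ((LinearMap.toContinuousLinearMap : (L →ₗ[ℝ] ℝ) ≃ₗ[ℝ] (L →L[ℝ] ℝ)).toLinearMap.comp b)

@[simp] lemma cts_apply (b : L →ₗ[ℝ] L →ₗ[ℝ] L) (u v : L) : cts b u v = b u v := by
  simp [cts]

@[simp] lemma ctsR_apply (b : L →ₗ[ℝ] L →ₗ[ℝ] ℝ) (u v : L) : ctsR b u v = b u v := by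
  simp [ctsR]

variable (brkt : L →ₗ[ℝ] L →ₗ[ℝ] L) (lam : L →ₗ[ℝ] L →ₗ[ℝ] ℝ)

lemma fderiv_affineBracket (d : ((L →L[ℝ] ℝ) → ℝ) → (L →L[ℝ] ℝ) → L)
    (hd : ∀ (f : (L →L[ℝ] ℝ) → ℝ) (ξ α : L →L[ℝ] ℝ), α (d f ξ) = fderiv ℝ f ξ α)
    {g h : (L →L[ℝ] ℝ) → ℝ}
    (hg : ContDiff ℝ (⊤ : ℕ∞) g) (hh : ContDiff ℝ (⊤ : ℕ∞) h) (ξ α : L →L[ℝ] ℝ) :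
    fderiv ℝ (affineBracket brkt lam d g h) ξ α
      = α (brkt (d g ξ) (d h ξ))
        + (ξ (brkt (dd g ξ α) (d h ξ)) + lam (dd g ξ α) (d h ξ))
        + (ξ (brkt (d g ξ) (dd h ξ α)) + lam (d g ξ) (dd h ξ α)) := by
  have hG := hasFDerivAt_d d hd hg ξ
  have hH := hasFDerivAt_d d hd hh ξ
  have h1 : HasFDerivAt (fun η => cts brkt (d g η)) ((cts brkt).comp (dd g ξ)) ξ :=
    ((cts brkt).hasFDerivAt (x := d g ξ)).comp ξ hG
  have h2 := h1.clm_apply hH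
  have h3 := (hasFDerivAt_id ξ).clm_apply h2
  have l1 : HasFDerivAt (fun η => ctsR lam (d g η)) ((ctsR lam).comp (dd g ξ)) ξ :=
    ((ctsR lam).hasFDerivAt (x := d g ξ)).comp ξ hG
  have l2 := l1.clm_apply hH
  have tot := h3.add l2
  have heq : (fun η : L →L[ℝ] ℝ => (id η) (cts brkt (d g η) (d h η)) + ctsR lam (d g η) (d h η))
      = affineBracket brkt lam d g h := by
    funext η
    simp [affineBracket]
  simp only [Pi.add_def] at tot
  rw [heq] at tot
  rw [tot.fderiv]
  simp [ContinuousLinearMap.add_apply, ContinuousLinearMap.comp_apply,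
    ContinuousLinearMap.flip_apply, map_add]
  ring

/-- the linear functional `v ↦ ξ ⁅u, v⁆ + λ(u,v)`, as an element of `g*`. -/
noncomputable def alphaF (ξ : L →L[ℝ] ℝ) (u : L) : L →L[ℝ] ℝ :=
  ξ.comp (cts brkt u) + ctsR lam u

@[simp] lemma alphaF_apply (ξ : L →L[ℝ] ℝ) (u v : L) :
    alphaF brkt lam ξ u v = ξ (brkt u v) + lam u v := by
  simp [alphaF]

lemma affineBracket_nested (d : ((L →L[ℝ] ℝ) → ℝ) → (L →L[ℝ] ℝ) → L)
    (hd : ∀ (f : (L →L[ℝ] ℝ) → ℝ) (ξ α : L →L[ℝ] ℝ), α (d f ξ) = fderiv ℝ f ξ α)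
    (f : (L →L[ℝ] ℝ) → ℝ) {g h : (L →L[ℝ] ℝ) → ℝ}
    (hg : ContDiff ℝ (⊤ : ℕ∞) g) (hh : ContDiff ℝ (⊤ : ℕ∞) h) (ξ : L →L[ℝ] ℝ) :
    affineBracket brkt lam d f (affineBracket brkt lam d g h) ξ
      = (ξ (brkt (d f ξ) (brkt (d g ξ) (d h ξ))) + lam (d f ξ) (brkt (d g ξ) (d h ξ)))
        + (ξ (brkt (dd g ξ (alphaF brkt lam ξ (d f ξ))) (d h ξ))
            + lam (dd g ξ (alphaF brkt lam ξ (d f ξ))) (d h ξ))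
        + (ξ (brkt (d g ξ) (dd h ξ (alphaF brkt lam ξ (d f ξ))))
            + lam (d g ξ) (dd h ξ (alphaF brkt lam ξ (d f ξ)))) := by
  have key : affineBracket brkt lam d f (affineBracket brkt lam d g h) ξ
      = alphaF brkt lam ξ (d f ξ) (d (affineBracket brkt lam d g h) ξ) := by
    simp [affineBracket]
  rw [key, hd, fderiv_affineBracket brkt lam d hd hg hh ξ]
  simp only [alphaF_apply]

end Aux

/-- The affine bracket `{·,·}_λ` on the dual of a finite-dimensional real Lie algebra
satisfies the Jacobi identity (on all smooth functions) if and only if `λ` is a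
2-cocycle on the Lie algebra. -/
theorem affineBracket_jacobi_iff_cocycle {L : Type*} [NormedAddCommGroup L]
    [NormedSpace ℝ L] [FiniteDimensional ℝ L]
    -- the Lie algebra structure on `L`:
    (brkt : L →ₗ[ℝ] L →ₗ[ℝ] L)
    (hbrkt_alt : ∀ u : L, brkt u u = 0)
    (hbrkt_jacobi : ∀ u v w : L,
      brkt u (brkt v w) + brkt w (brkt u v) + brkt v (brkt w u) = 0)
    -- an alternating bilinear form on `L`:
    (lam : L →ₗ[ℝ] L →ₗ[ℝ] ℝ)
    (hlam : ∀ u : L, lam u u = 0)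
    -- the identification of the Fréchet derivative at `ξ ∈ g*` with an element of `g`,
    -- via the canonical isomorphism `g ≅ (g*)*`:
    (d : ((L →L[ℝ] ℝ) → ℝ) → (L →L[ℝ] ℝ) → L)
    (hd : ∀ (f : (L →L[ℝ] ℝ) → ℝ) (ξ α : L →L[ℝ] ℝ), α (d f ξ) = fderiv ℝ f ξ α) :
    (∀ f g h : (L →L[ℝ] ℝ) → ℝ,
        ContDiff ℝ (⊤ : ℕ∞) f → ContDiff ℝ (⊤ : ℕ∞) g → ContDiff ℝ (⊤ : ℕ∞) h →
        ∀ ξ : L →L[ℝ] ℝ,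
          affineBracket brkt lam d f (affineBracket brkt lam d g h) ξ
            + affineBracket brkt lam d h (affineBracket brkt lam d f g) ξ
            + affineBracket brkt lam d g (affineBracket brkt lam d h f) ξ = 0)
      ↔ (∀ u v w : L, lam u (brkt v w) + lam w (brkt u v) + lam v (brkt w u) = 0) := by
  have add0 : ∀ a b : L, brkt a b + brkt b a = 0 := by
    intro a b
    have h0 := hbrkt_alt (a + b)
    simp only [map_add, LinearMap.add_apply, hbrkt_alt, zero_add, add_zero] at h0
    rw [add_comm]
    exact h0
  have bp : ∀ a b : L, (∀ ξ : L →L[ℝ] ℝ, ξ (brkt a b) + ξ (brkt b a) = 0) := by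
    intro a b ξ
    rw [← map_add, add0, map_zero]
  have lamp : ∀ a b : L, lam a b + lam b a = 0 := by
    intro a b
    have h0 := hlam (a + b)
    simp only [map_add, LinearMap.add_apply, hlam, zero_add, add_zero] at h0
    linarith
  constructor
  · intro hjac u v w
    have hsm : ∀ x : L, ContDiff ℝ (⊤ : ℕ∞) (fun ξ : L →L[ℝ] ℝ => ξ x) := by
      intro x
      exact (ContinuousLinearMap.apply ℝ ℝ x).contDiff
    have hfd : ∀ (x : L) (ξ : L →L[ℝ] ℝ),
        fderiv ℝ (fun η : L →L[ℝ] ℝ => η x) ξ = ContinuousLinearMap.apply ℝ ℝ x := by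
      intro x ξ
      exact (ContinuousLinearMap.apply ℝ ℝ x).fderiv
    have hdu : ∀ (x : L) (ξ : L →L[ℝ] ℝ), d (fun η : L →L[ℝ] ℝ => η x) ξ = x := by
      intro x ξ
      apply aux_sep
      intro α
      rw [hd, hfd]
      rfl
    have hdP : ∀ (x y : L) (ξ : L →L[ℝ] ℝ),
        d (affineBracket brkt lam d (fun η => η x) (fun η => η y)) ξ = brkt x y := by
      intro x y ξ
      apply aux_sep
      intro α
      rw [hd]
      have hPeq : affineBracket brkt lam d (fun η => η x) (fun η => η y)
          = fun η : L →L[ℝ] ℝ => η (brkt x y) + lam x y := by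
        funext η
        simp [affineBracket, hdu]
      rw [hPeq]
      rw [fderiv_add_const]
      rw [hfd]
      rfl
    have H := hjac (fun η => η u) (fun η => η v) (fun η => η w)
      (hsm u) (hsm v) (hsm w) 0
    simp only [affineBracket, hdu, hdP, ContinuousLinearMap.zero_apply, zero_add] at H
    linarith
  · intro hcoc f g h hf hg hh ξ
    rw [affineBracket_nested brkt lam d hd f hg hh ξ,
        affineBracket_nested brkt lam d hd h hf hg ξ,
        affineBracket_nested brkt lam d hd g hh hf ξ]
    have S1 : ξ (brkt (d f ξ) (brkt (d g ξ) (d h ξ)))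
        + ξ (brkt (d h ξ) (brkt (d f ξ) (d g ξ)))
        + ξ (brkt (d g ξ) (brkt (d h ξ) (d f ξ))) = 0 := by
      rw [← map_add, ← map_add, hbrkt_jacobi, map_zero]
    have S2 := hcoc (d f ξ) (d g ξ) (d h ξ)
    have Y1 : ξ (brkt (d g ξ) (dd h ξ (alphaF brkt lam ξ (d f ξ))))
          + lam (d g ξ) (dd h ξ (alphaF brkt lam ξ (d f ξ)))
        = ξ (brkt (d f ξ) (dd h ξ (alphaF brkt lam ξ (d g ξ))))
          + lam (d f ξ) (dd h ξ (alphaF brkt lam ξ (d g ξ))) := by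
      simpa [alphaF_apply] using
        dd_symm hh ξ (alphaF brkt lam ξ (d f ξ)) (alphaF brkt lam ξ (d g ξ))
    have Y2 : ξ (brkt (d f ξ) (dd g ξ (alphaF brkt lam ξ (d h ξ))))
          + lam (d f ξ) (dd g ξ (alphaF brkt lam ξ (d h ξ)))
        = ξ (brkt (d h ξ) (dd g ξ (alphaF brkt lam ξ (d f ξ))))
          + lam (d h ξ) (dd g ξ (alphaF brkt lam ξ (d f ξ))) := by
      simpa [alphaF_apply] using
        dd_symm hg ξ (alphaF brkt lam ξ (d h ξ)) (alphaF brkt lam ξ (d f ξ))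
    have Y3 : ξ (brkt (d h ξ) (dd f ξ (alphaF brkt lam ξ (d g ξ))))
          + lam (d h ξ) (dd f ξ (alphaF brkt lam ξ (d g ξ)))
        = ξ (brkt (d g ξ) (dd f ξ (alphaF brkt lam ξ (d h ξ))))
          + lam (d g ξ) (dd f ξ (alphaF brkt lam ξ (d h ξ))) := by
      simpa [alphaF_apply] using
        dd_symm hf ξ (alphaF brkt lam ξ (d g ξ)) (alphaF brkt lam ξ (d h ξ))
    linarith [S1, S2, Y1, Y2, Y3,
      bp (dd g ξ (alphaF brkt lam ξ (d f ξ))) (d h ξ) ξ,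
      lamp (dd g ξ (alphaF brkt lam ξ (d f ξ))) (d h ξ),
      bp (dd f ξ (alphaF brkt lam ξ (d h ξ))) (d g ξ) ξ,
      lamp (dd f ξ (alphaF brkt lam ξ (d h ξ))) (d g ξ),
      bp (dd h ξ (alphaF brkt lam ξ (d g ξ))) (d f ξ) ξ,
      lamp (dd h ξ (alphaF brkt lam ξ (d g ξ))) (d f ξ)]
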